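/- Let a set R_j of items be packed in a knapsack bin j of capacity c_j (each item i has size s_{ij} > 0 and the sizes of items in R_j sum to at most c_j), and let ε ∈ (0,1) with 1/ε an integer. Then there exist a set X_j ⊆ R_j with |X_j| ≤ 1/ε² and a set Y_j ⊆ R_j with profit p(Y_j) ≤ ε·p(R_j), such that every item in R_j \ (X_j ∪ Y_j) has size at most ε·(c_j − Σ_{i∈X_j} s_{ij}). -/

import Mathlib

open Finset

open scoped Classical in
/-- Iteratively built set of "big" items. -/
noncomputable def gapX {ι : Type*} [DecidableEq ι] (R : Finset ι) (sz : ι → ℝ) (c ε : ℝ) :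
    ℕ → Finset ι
  | 0 => ∅
  | (k+1) => gapX R sz c ε k ∪
      (R \ gapX R sz c ε k).filter
        (fun i => ε * (c - ∑ j ∈ gapX R sz c ε k, sz j) < sz i)

open scoped Classical in
/-- The `k`-th group of big items. -/
noncomputable def gapB {ι : Type*} [DecidableEq ι] (R : Finset ι) (sz : ι → ℝ) (c ε : ℝ)
    (k : ℕ) : Finset ι :=
  (R \ gapX R sz c ε k).filter
    (fun i => ε * (c - ∑ j ∈ gapX R sz c ε k, sz j) < sz i)

lemma gapX_succ {ι : Type*} [DecidableEq ι] (R : Finset ι) (sz : ι → ℝ) (c ε : ℝ) (k : ℕ) :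
    gapX R sz c ε (k+1) = gapX R sz c ε k ∪ gapB R sz c ε k := by
  simp [gapX, gapB]

lemma gapB_subset {ι : Type*} [DecidableEq ι] (R : Finset ι) (sz : ι → ℝ) (c ε : ℝ) (k : ℕ) :
    gapB R sz c ε k ⊆ R \ gapX R sz c ε k := by
  classical
  exact Finset.filter_subset _ _

lemma gapX_subset {ι : Type*} [DecidableEq ι] (R : Finset ι) (sz : ι → ℝ) (c ε : ℝ) :
    ∀ k, gapX R sz c ε k ⊆ R := by
  intro k
  induction k with
  | zero => simp [gapX]
  | succ k ih =>
      rw [gapX_succ]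
      exact Finset.union_subset ih ((gapB_subset R sz c ε k).trans (Finset.sdiff_subset))

lemma gapX_disjoint_gapB {ι : Type*} [DecidableEq ι] (R : Finset ι) (sz : ι → ℝ) (c ε : ℝ)
    (k : ℕ) : Disjoint (gapX R sz c ε k) (gapB R sz c ε k) :=
  (Finset.disjoint_sdiff.mono_right (gapB_subset R sz c ε k))

theorem gap_shifting {ι : Type*} [DecidableEq ι]
    (R : Finset ι) (sz p : ι → ℝ) (c ε : ℝ)
    (hsz : ∀ i ∈ R, 0 < sz i) (hp : ∀ i ∈ R, 0 ≤ p i)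
    (hc : ∑ i ∈ R, sz i ≤ c)
    (hε0 : 0 < ε) (hε1 : ε < 1) (hεint : ∃ m : ℕ, 0 < m ∧ ε = 1 / (m : ℝ)) :
    ∃ X ⊆ R, ∃ Y ⊆ R, (X.card : ℝ) ≤ 1 / ε ^ 2 ∧
      (∑ i ∈ Y, p i) ≤ ε * ∑ i ∈ R, p i ∧
      ∀ i ∈ R \ (X ∪ Y), sz i ≤ ε * (c - ∑ j ∈ X, sz j) := by
  classical
  obtain ⟨m, hm, hεm⟩ := hεint
  have hm0 : (0 : ℝ) < m := by exact_mod_cast hm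
  have hεmul : ε * m = 1 := by rw [hεm]; field_simp
  -- residual capacity is nonnegative
  have hres : ∀ k, 0 ≤ c - ∑ j ∈ gapX R sz c ε k, sz j := by
    intro k
    have hsub := gapX_subset R sz c ε k
    have : ∑ j ∈ gapX R sz c ε k, sz j ≤ ∑ j ∈ R, sz j :=
      Finset.sum_le_sum_of_subset_of_nonneg hsub
        (fun i hi _ => (hsz i hi).le)
    linarith
  -- each group has at most 1/ε elements
  have hBcard : ∀ k, ((gapB R sz c ε k).card : ℝ) ≤ 1 / ε := by
    intro k
    set r := c - ∑ j ∈ gapX R sz c ε k, sz j with hr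
    rcases Finset.eq_empty_or_nonempty (gapB R sz c ε k) with h | h
    · simp [h]; positivity
    · have hBsub : gapB R sz c ε k ⊆ R \ gapX R sz c ε k := gapB_subset R sz c ε k
      have hbig : ∀ i ∈ gapB R sz c ε k, ε * r < sz i := by
        intro i hi
        exact (Finset.mem_filter.mp hi).2
      -- total size of the group is at most r
      have hsum1 : ∑ i ∈ gapB R sz c ε k, sz i ≤ ∑ i ∈ R \ gapX R sz c ε k, sz i :=
        Finset.sum_le_sum_of_subset_of_nonneg hBsub
          (fun i hi _ => (hsz i (Finset.mem_sdiff.mp hi).1).le)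
      have hsum2 : ∑ i ∈ R \ gapX R sz c ε k, sz i ≤ r := by
        have := Finset.sum_sdiff (gapX_subset R sz c ε k) (f := sz)
        rw [hr]
        linarith
      have hsumB : ∑ i ∈ gapB R sz c ε k, sz i ≤ r := hsum1.trans hsum2
      -- lower bound on the sum
      have hlow : ((gapB R sz c ε k).card : ℝ) * (ε * r) ≤ ∑ i ∈ gapB R sz c ε k, sz i := by
        calc ((gapB R sz c ε k).card : ℝ) * (ε * r)
            = ∑ _i ∈ gapB R sz c ε k, ε * r := by
              rw [Finset.sum_const, nsmul_eq_mul]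
          _ ≤ ∑ i ∈ gapB R sz c ε k, sz i :=
              Finset.sum_le_sum (fun i hi => (hbig i hi).le)
      -- r is positive
      obtain ⟨i, hi⟩ := h
      have hrpos : 0 < r := by
        have h1 : ε * r < sz i := hbig i hi
        have h2 : sz i ≤ ∑ j ∈ gapB R sz c ε k, sz j :=
          Finset.single_le_sum
            (fun j hj => (hsz j ((Finset.mem_sdiff.mp (hBsub hj)).1)).le) hi
        nlinarith [hres k]
      have : ((gapB R sz c ε k).card : ℝ) * ε ≤ 1 := by
        have := hlow.trans hsumB
        nlinarith
      rw [le_div_iff₀ hε0]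
      exact this
  -- card of gapX t is at most t/ε
  have hXcard : ∀ t : ℕ, ((gapX R sz c ε t).card : ℝ) ≤ t / ε := by
    intro t
    induction t with
    | zero => simp [gapX]
    | succ t ih =>
        rw [gapX_succ]
        have h1 : ((gapX R sz c ε t ∪ gapB R sz c ε t).card : ℝ)
            ≤ (gapX R sz c ε t).card + (gapB R sz c ε t).card := by
          exact_mod_cast Finset.card_union_le _ _
        have hB := hBcard t
        have hadd : ((t:ℝ)+1)/ε = (t:ℝ)/ε + 1/ε := add_div _ _ _
        push_cast
        rw [hadd]
        linarith
  -- telescoping profit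
  have hprofit : ∀ t : ℕ, ∑ i ∈ gapX R sz c ε t, p i
      = ∑ k ∈ Finset.range t, ∑ i ∈ gapB R sz c ε k, p i := by
    intro t
    induction t with
    | zero => simp [gapX]
    | succ t ih =>
        rw [gapX_succ, Finset.sum_union (gapX_disjoint_gapB R sz c ε t),
          Finset.sum_range_succ, ih]
  have hprofitR : ∑ k ∈ Finset.range m, ∑ i ∈ gapB R sz c ε k, p i ≤ ∑ i ∈ R, p i := by
    rw [← hprofit m]
    exact Finset.sum_le_sum_of_subset_of_nonneg (gapX_subset R sz c ε m)
      (fun i hi _ => hp i hi)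
  -- one group has small profit
  have hexists : ∃ t ∈ Finset.range m, ∑ i ∈ gapB R sz c ε t, p i ≤ ε * ∑ i ∈ R, p i := by
    by_contra hcon
    push_neg at hcon
    have : (m : ℝ) * (ε * ∑ i ∈ R, p i) < ∑ k ∈ Finset.range m, ∑ i ∈ gapB R sz c ε k, p i := by
      calc (m : ℝ) * (ε * ∑ i ∈ R, p i)
          = ∑ _k ∈ Finset.range m, ε * ∑ i ∈ R, p i := by
            rw [Finset.sum_const, Finset.card_range, nsmul_eq_mul]
        _ < ∑ k ∈ Finset.range m, ∑ i ∈ gapB R sz c ε k, p i := by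
            apply Finset.sum_lt_sum_of_nonempty
            · exact ⟨0, Finset.mem_range.mpr hm⟩
            · exact fun k hk => hcon k hk
    have heq : (m : ℝ) * (ε * ∑ i ∈ R, p i) = ∑ i ∈ R, p i := by
      rw [← mul_assoc, mul_comm (m : ℝ) ε, hεmul, one_mul]
    linarith [hprofitR]
  obtain ⟨t, ht, hYprofit⟩ := hexists
  have htm : t < m := Finset.mem_range.mp ht
  refine ⟨gapX R sz c ε t, gapX_subset R sz c ε t, gapB R sz c ε t,
    (gapB_subset R sz c ε t).trans Finset.sdiff_subset, ?_, hYprofit, ?_⟩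
  · -- cardinality bound
    have h1 := hXcard t
    have htm' : (t : ℝ) ≤ (m : ℝ) := by exact_mod_cast htm.le
    have h2 : (t : ℝ) / ε ≤ (m : ℝ) / ε := by gcongr
    have h3 : (m : ℝ) / ε = 1 / ε ^ 2 := by
      rw [hεm]
      field_simp
    linarith
  · intro i hi
    rw [Finset.mem_sdiff, Finset.mem_union] at hi
    obtain ⟨hiR, hnot⟩ := hi
    push_neg at hnot
    obtain ⟨hiX, hiB⟩ := hnot
    by_contra hcon
    push_neg at hcon
    apply hiB
    unfold gapB
    rw [Finset.mem_filter, Finset.mem_sdiff]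
    exact ⟨⟨hiR, hiX⟩, hcon⟩
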